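/- Let π₁, π₂ ∈ Δ^{n×n} be probability matrices with strictly positive entries and let c(π) = πᵀ1 denote the column-sum vector. Let q ∈ R^n have strictly positive entries and τ > 0. For families μ₁, μ₂ of n probability vectors on the 2-simplex, ⟨μ_{1,+} − μ_{2,+} − μ_{1,-} + μ_{2,-}, c(π₁) − c(π₂)⟩ ≤ (τ/2)·∑_j q_j D_KL(μ_{1,j}‖μ_{2,j}) + (2/(τ·min_i q_i))·D_KL(π₁‖π₂). -/

import Mathlib

open Real Finset

/-- Binary Pinsker inequality. -/
lemma binPinsker (a b : ℝ) (ha0 : 0 ≤ a) (ha1 : a ≤ 1) (hb0 : 0 < b) (hb1 : b < 1) :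
    2 * (a - b)^2 ≤ a * Real.log (a / b) + (1 - a) * Real.log ((1 - a) / (1 - b)) := by
  set g : ℝ → ℝ := fun t => a * (Real.log a - Real.log t)
      + (1 - a) * (Real.log (1 - a) - Real.log (1 - t)) - 2 * (a - t)^2 with hg
  have hga : g a = 0 := by simp [hg]
  have hgb : g b = a * Real.log (a / b) + (1 - a) * Real.log ((1 - a) / (1 - b))
      - 2 * (a - b)^2 := by
    have h1 : a * Real.log (a / b) = a * (Real.log a - Real.log b) := by
      rcases eq_or_lt_of_le ha0 with h | h
      · simp [← h]
      · rw [Real.log_div h.ne' hb0.ne']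
    have h2 : (1 - a) * Real.log ((1 - a) / (1 - b))
        = (1 - a) * (Real.log (1 - a) - Real.log (1 - b)) := by
      rcases eq_or_lt_of_le ha1 with h | h
      · simp [h]
      · rw [Real.log_div (by linarith) (by linarith)]
    simp only [hg, h1, h2]
  have hderiv : ∀ t : ℝ, (t ≠ 0 ∨ a = 0) → (t ≠ 1 ∨ a = 1) →
      HasDerivAt g (-(a / t) + (1 - a) / (1 - t) + 4 * (a - t)) t := by
    intro t ht0 ht1
    have hquad : HasDerivAt (fun t : ℝ => 2 * (a - t)^2) (-(4 * (a - t))) t := by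
      have h : HasDerivAt (fun t : ℝ => a - t) (-1) t := (hasDerivAt_id t).const_sub a
      have := (h.pow 2).const_mul (2:ℝ)
      refine this.congr_deriv ?_
      ring
    have h1 : HasDerivAt (fun t : ℝ => a * (Real.log a - Real.log t)) (-(a / t)) t := by
      rcases ht0 with ht0 | ha
      · have := ((Real.hasDerivAt_log ht0).const_sub (Real.log a)).const_mul a
        refine this.congr_deriv ?_
        field_simp
      · have : (fun t : ℝ => a * (Real.log a - Real.log t)) = fun _ => 0 := by
          funext x; simp [ha]
        rw [this, ha]
        simpa using hasDerivAt_const t (0:ℝ)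
    have h2 : HasDerivAt (fun t : ℝ => (1 - a) * (Real.log (1 - a) - Real.log (1 - t)))
        ((1 - a) / (1 - t)) t := by
      rcases ht1 with ht1 | ha
      · have hne : (1:ℝ) - t ≠ 0 := by
          intro h; apply ht1; linarith [sub_eq_zero.mp h]
        have hin : HasDerivAt (fun t : ℝ => 1 - t) (-1) t := (hasDerivAt_id t).const_sub 1
        have hl : HasDerivAt (fun t : ℝ => Real.log (1 - t)) ((1-t)⁻¹ * (-1)) t :=
          (Real.hasDerivAt_log hne).comp t hin
        have := (hl.const_sub (Real.log (1 - a))).const_mul (1 - a)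
        refine this.congr_deriv ?_
        field_simp
      · have : (fun t : ℝ => (1 - a) * (Real.log (1 - a) - Real.log (1 - t))) = fun _ => 0 := by
          funext x; simp [ha]
        rw [this]
        have : (1 - a) / (1 - t) = 0 := by rw [ha]; simp
        rw [this]
        exact hasDerivAt_const t (0:ℝ)
    have := (h1.add h2).sub hquad
    refine this.congr_deriv ?_
    ring
  have hderiv_eq : ∀ t : ℝ, 0 < t → t < 1 →
      -(a / t) + (1 - a) / (1 - t) + 4 * (a - t) = (t - a) * (1 - 2*t)^2 / (t * (1 - t)) := by
    intro t ht0 ht1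
    have h1 : t ≠ 0 := ht0.ne'
    have h2 : (1:ℝ) - t ≠ 0 := by linarith
    field_simp
    ring
  have key : 0 ≤ g b := by
    rcases le_or_gt a b with hab | hab
    · rcases eq_or_lt_of_le hab with h | hab
      · rw [← h, hga]
      have hmono : MonotoneOn g (Set.Icc a b) := by
        apply monotoneOn_of_deriv_nonneg (convex_Icc a b)
        · -- continuity on [a, b]
          apply ContinuousOn.sub
          apply ContinuousOn.add
          · rcases eq_or_lt_of_le ha0 with h | h
            · have : (fun t : ℝ => a * (Real.log a - Real.log t)) = fun _ => 0 := by
                funext x; simp [← h]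
              rw [this]; exact continuousOn_const
            · exact continuousOn_const.mul (continuousOn_const.sub
                (Real.continuousOn_log.mono (fun t ht =>
                  (lt_of_lt_of_le h ht.1).ne')))
          · refine continuousOn_const.mul (continuousOn_const.sub ?_)
            refine (Real.continuousOn_log.comp (continuousOn_const.sub continuousOn_id) ?_)
            intro t ht
            have : t ≤ b := ht.2
            simp only [Set.mem_compl_iff, Set.mem_singleton_iff]
            intro h
            have : (1:ℝ) - t = 0 := h
            linarith
          · exact continuousOn_const.mul ((continuousOn_const.sub continuousOn_id).pow 2)
        · rw [interior_Icc]
          intro t ht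
          have ht0 : 0 < t := lt_of_le_of_lt ha0 ht.1
          have ht1 : t < 1 := lt_trans ht.2 hb1
          exact (hderiv t (Or.inl ht0.ne') (Or.inl ht1.ne)).differentiableAt.differentiableWithinAt
        · rw [interior_Icc]
          intro t ht
          have ht0 : 0 < t := lt_of_le_of_lt ha0 ht.1
          have ht1 : t < 1 := lt_trans ht.2 hb1
          rw [(hderiv t (Or.inl ht0.ne') (Or.inl ht1.ne)).deriv, hderiv_eq t ht0 ht1]
          apply div_nonneg
          · exact mul_nonneg (by linarith [ht.1]) (sq_nonneg _)
          · nlinarith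
      have := hmono (Set.left_mem_Icc.mpr hab.le) (Set.right_mem_Icc.mpr hab.le) hab.le
      rw [hga] at this; exact this
    · have hanti : AntitoneOn g (Set.Icc b a) := by
        apply antitoneOn_of_deriv_nonpos (convex_Icc b a)
        · apply ContinuousOn.sub
          apply ContinuousOn.add
          · exact continuousOn_const.mul (continuousOn_const.sub
              (Real.continuousOn_log.mono (fun t ht =>
                (lt_of_lt_of_le hb0 ht.1).ne')))
          · rcases eq_or_lt_of_le ha1 with h | h
            · have : (fun t : ℝ => (1 - a) * (Real.log (1 - a) - Real.log (1 - t))) = fun _ => 0 := by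
                funext x; simp [h]
              rw [this]; exact continuousOn_const
            · refine continuousOn_const.mul (continuousOn_const.sub ?_)
              refine (Real.continuousOn_log.comp (continuousOn_const.sub continuousOn_id) ?_)
              intro t ht
              have : t ≤ a := ht.2
              simp only [Set.mem_compl_iff, Set.mem_singleton_iff]
              intro heq
              have : (1:ℝ) - t = 0 := heq
              linarith
          · exact continuousOn_const.mul ((continuousOn_const.sub continuousOn_id).pow 2)
        · rw [interior_Icc]
          intro t ht
          have ht0 : 0 < t := lt_trans hb0 ht.1
          have ht1 : t < 1 := lt_of_lt_of_le ht.2 ha1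
          exact (hderiv t (Or.inl ht0.ne') (Or.inl ht1.ne)).differentiableAt.differentiableWithinAt
        · rw [interior_Icc]
          intro t ht
          have ht0 : 0 < t := lt_trans hb0 ht.1
          have ht1 : t < 1 := lt_of_lt_of_le ht.2 ha1
          rw [(hderiv t (Or.inl ht0.ne') (Or.inl ht1.ne)).deriv, hderiv_eq t ht0 ht1]
          apply div_nonpos_of_nonpos_of_nonneg
          · exact mul_nonpos_of_nonpos_of_nonneg (by linarith [ht.2]) (sq_nonneg _)
          · nlinarith
      have := hanti (Set.left_mem_Icc.mpr hab.le) (Set.right_mem_Icc.mpr hab.le) hab.le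
      rw [hga] at this; exact this
  rw [hgb] at key
  linarith

open Real Finset

/-- Log-sum inequality over a finset. -/
lemma logSum {ι : Type*} (s : Finset ι) (p q : ι → ℝ)
    (hp : ∀ i ∈ s, 0 ≤ p i) (hq : ∀ i ∈ s, 0 < q i) :
    (∑ i ∈ s, p i) * Real.log ((∑ i ∈ s, p i) / (∑ i ∈ s, q i)) ≤
      ∑ i ∈ s, p i * Real.log (p i / q i) := by
  rcases s.eq_empty_or_nonempty with rfl | hs
  · simp
  set P := ∑ i ∈ s, p i with hP
  set Q := ∑ i ∈ s, q i with hQ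
  have hQ0 : 0 < Q := Finset.sum_pos hq hs
  have hJ := (convexOn_mul_log).map_sum_le (t := s) (w := fun i => q i / Q)
    (p := fun i => p i / q i)
    (fun i hi => div_nonneg (hq i hi).le hQ0.le)
    (by rw [← Finset.sum_div, div_self hQ0.ne'])
    (fun i hi => Set.mem_Ici.mpr (div_nonneg (hp i hi) (hq i hi).le))
  simp only [smul_eq_mul] at hJ
  have hsum : ∑ i ∈ s, q i / Q * (p i / q i) = P / Q := by
    calc ∑ i ∈ s, q i / Q * (p i / q i) = ∑ i ∈ s, p i / Q :=
          Finset.sum_congr rfl fun i hi => by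
            have := (hq i hi).ne'
            field_simp
      _ = P / Q := by rw [hP, Finset.sum_div]
  rw [hsum] at hJ
  have := mul_le_mul_of_nonneg_left hJ hQ0.le
  calc P * Real.log (P / Q) = Q * (P / Q * Real.log (P / Q)) := by field_simp
    _ ≤ Q * ∑ i ∈ s, q i / Q * (p i / q i * Real.log (p i / q i)) := this
    _ = ∑ i ∈ s, p i * Real.log (p i / q i) := by
        rw [Finset.mul_sum]
        exact Finset.sum_congr rfl fun i hi => by
          have := (hq i hi).ne'
          field_simp

/-- Pinsker's inequality for finite probability vectors. -/
lemma pinsker {ι : Type*} [Fintype ι] (p q : ι → ℝ)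
    (hp : ∀ i, 0 ≤ p i) (hq : ∀ i, 0 < q i)
    (hps : ∑ i, p i = 1) (hqs : ∑ i, q i = 1) :
    (∑ i, |p i - q i|)^2 ≤ 2 * ∑ i, p i * Real.log (p i / q i) := by
  have hKL0 : 0 ≤ ∑ i, p i * Real.log (p i / q i) := by
    have := logSum Finset.univ p q (fun i _ => hp i) (fun i _ => hq i)
    rw [hps, hqs] at this
    simpa using this
  set A := Finset.univ.filter (fun i => q i < p i) with hA
  have hsplit_p := Finset.sum_filter_add_sum_filter_not Finset.univ (fun i => q i < p i) p
  have hsplit_q := Finset.sum_filter_add_sum_filter_not Finset.univ (fun i => q i < p i) q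
  rw [hps] at hsplit_p
  rw [hqs] at hsplit_q
  set Ac := Finset.univ.filter (fun i => ¬ q i < p i) with hAc
  set pA := ∑ i ∈ A, p i with hpA
  set qA := ∑ i ∈ A, q i with hqA
  have habs : ∑ i, |p i - q i| = 2 * (pA - qA) := by
    rw [← Finset.sum_filter_add_sum_filter_not Finset.univ (fun i => q i < p i) (fun i => |p i - q i|)]
    have h1 : ∑ i ∈ A, |p i - q i| = ∑ i ∈ A, (p i - q i) :=
      Finset.sum_congr rfl fun i hi => abs_of_pos (sub_pos.mpr (Finset.mem_filter.mp hi).2)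
    have h2 : ∑ i ∈ Ac, |p i - q i| = ∑ i ∈ Ac, (q i - p i) :=
      Finset.sum_congr rfl fun i hi => by
        rw [abs_sub_comm]
        exact abs_of_nonneg (sub_nonneg.mpr (not_lt.mp (Finset.mem_filter.mp hi).2))
    rw [h1, h2, Finset.sum_sub_distrib, Finset.sum_sub_distrib]
    have e1 : ∑ i ∈ Ac, p i = 1 - pA := by linarith
    have e2 : ∑ i ∈ Ac, q i = 1 - qA := by linarith
    rw [e1, e2]
    ring
  rcases A.eq_empty_or_nonempty with hAe | hAne
  · rw [habs]
    have : pA = 0 := by rw [hpA, hAe]; simp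
    have : qA = 0 := by rw [hqA, hAe]; simp
    have hpA0 : pA = 0 := by rw [hpA, hAe]; simp
    have hqA0 : qA = 0 := by rw [hqA, hAe]; simp
    rw [hpA0, hqA0]
    simpa using hKL0
  rcases Ac.eq_empty_or_nonempty with hAce | hAcne
  · exfalso
    have huniv : (Finset.univ : Finset ι).Nonempty := by
      obtain ⟨i, hi⟩ := hAne
      exact ⟨i, Finset.mem_univ i⟩
    have : ∑ i, q i < ∑ i, p i := by
      apply Finset.sum_lt_sum_of_nonempty huniv
      intro i _
      by_contra hcon
      have : i ∈ Ac := Finset.mem_filter.mpr ⟨Finset.mem_univ i, hcon⟩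
      rw [hAce] at this
      exact absurd this (Finset.notMem_empty i)
    rw [hps, hqs] at this
    exact lt_irrefl 1 this
  -- main case
  have hqA0 : 0 < qA := Finset.sum_pos (fun i _ => hq i) hAne
  have hqAc0 : 0 < ∑ i ∈ Ac, q i := Finset.sum_pos (fun i _ => hq i) hAcne
  have hqA1 : qA < 1 := by linarith
  have hpA0 : 0 ≤ pA := Finset.sum_nonneg fun i _ => hp i
  have hpAc0 : 0 ≤ ∑ i ∈ Ac, p i := Finset.sum_nonneg fun i _ => hp i
  have hpA1 : pA ≤ 1 := by linarith
  have hls1 := logSum A p q (fun i _ => hp i) (fun i _ => hq i)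
  have hls2 := logSum Ac p q (fun i _ => hp i) (fun i _ => hq i)
  have e1 : ∑ i ∈ Ac, p i = 1 - pA := by linarith
  have e2 : ∑ i ∈ Ac, q i = 1 - qA := by linarith
  rw [e1, e2] at hls2
  have hbp := binPinsker pA qA hpA0 hpA1 hqA0 hqA1
  have hKLsplit : ∑ i, p i * Real.log (p i / q i)
      = (∑ i ∈ A, p i * Real.log (p i / q i)) + ∑ i ∈ Ac, p i * Real.log (p i / q i) :=
    (Finset.sum_filter_add_sum_filter_not Finset.univ (fun i => q i < p i) _).symm
  rw [habs, hKLsplit]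
  nlinarith [hls1, hls2, hbp]
/-- Young's-inequality bound on the inner product of dual differences with
column-marginal differences, in terms of weighted KL divergences. -/
theorem stmt_4 (n : ℕ) (hn : 0 < n)
    (π1 π2 : Fin n → Fin n → ℝ)
    (hπ1 : ∀ i j, 0 < π1 i j) (hπ1s : ∑ i, ∑ j, π1 i j = 1)
    (hπ2 : ∀ i j, 0 < π2 i j) (hπ2s : ∑ i, ∑ j, π2 i j = 1)
    (q : Fin n → ℝ) (hq : ∀ i, 0 < q i) (τ : ℝ) (hτ : 0 < τ)
    (qmin : ℝ) (hqmin : IsLeast (Set.range q) qmin)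
    (μ1p μ1m μ2p μ2m : Fin n → ℝ)
    (hμ1p : ∀ j, 0 ≤ μ1p j) (hμ1m : ∀ j, 0 ≤ μ1m j) (hμ1 : ∀ j, μ1p j + μ1m j = 1)
    (hμ2p : ∀ j, 0 < μ2p j) (hμ2m : ∀ j, 0 < μ2m j) (hμ2 : ∀ j, μ2p j + μ2m j = 1) :
    ∑ j, (μ1p j - μ2p j - μ1m j + μ2m j) * ((∑ i, π1 i j) - (∑ i, π2 i j)) ≤
      τ/2 * ∑ j, q j * (μ1p j * Real.log (μ1p j / μ2p j) +
        μ1m j * Real.log (μ1m j / μ2m j))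
      + 2 / (τ * qmin) * ∑ i, ∑ j, π1 i j * Real.log (π1 i j / π2 i j) := by
  obtain ⟨⟨j0, hj0⟩, hlb⟩ := hqmin
  have hqmin0 : 0 < qmin := hj0 ▸ hq j0
  have hqminle : ∀ j, qmin ≤ q j := fun j => hlb ⟨j, rfl⟩
  have hc : 0 < τ * qmin := mul_pos hτ hqmin0
  set KLπ := ∑ i, ∑ j, π1 i j * Real.log (π1 i j / π2 i j) with hKLπ
  set b : Fin n → ℝ := fun j => (∑ i, π1 i j) - (∑ i, π2 i j) with hb
  set δ : Fin n → ℝ := fun j => μ1p j - μ2p j with hδ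
  have hπpin : (∑ x : Fin n × Fin n, |π1 x.1 x.2 - π2 x.1 x.2|)^2 ≤ 2 * KLπ := by
    rw [hKLπ]
    have := pinsker (fun x : Fin n × Fin n => π1 x.1 x.2) (fun x : Fin n × Fin n => π2 x.1 x.2)
      (fun x => (hπ1 x.1 x.2).le) (fun x => hπ2 x.1 x.2)
      (by rw [Fintype.sum_prod_type]; exact hπ1s)
      (by rw [Fintype.sum_prod_type]; exact hπ2s)
    simpa [Fintype.sum_prod_type] using this
  clear_value KLπ b δ
  have hstep : ∀ j, (μ1p j - μ2p j - μ1m j + μ2m j) * b j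
      ≤ τ * q j * (δ j)^2 + (b j)^2 / (τ * qmin) := by
    intro j
    have hcoef : μ1p j - μ2p j - μ1m j + μ2m j = 2 * δ j := by
      have h1 := hμ1 j; have h2 := hμ2 j
      simp only [hδ]; linarith
    rw [hcoef]
    have h1 : 2 * δ j * b j - (τ * qmin) * (δ j)^2 ≤ (b j)^2 / (τ * qmin) := by
      rw [le_div_iff₀ hc]
      nlinarith [sq_nonneg ((τ * qmin) * δ j - b j)]
    have h2 : (τ * qmin) * (δ j)^2 ≤ τ * q j * (δ j)^2 := by
      apply mul_le_mul_of_nonneg_right _ (sq_nonneg _)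
      exact mul_le_mul_of_nonneg_left (hqminle j) hτ.le
    linarith
  have hA : ∑ j, τ * q j * (δ j)^2 ≤ τ/2 * ∑ j, q j * (μ1p j * Real.log (μ1p j / μ2p j) +
      μ1m j * Real.log (μ1m j / μ2m j)) := by
    rw [Finset.mul_sum]
    apply Finset.sum_le_sum
    intro j _
    have hbp := binPinsker (μ1p j) (μ2p j) (hμ1p j)
      (by linarith [hμ1 j, hμ1m j]) (hμ2p j) (by linarith [hμ2 j, hμ2m j])
    have e1 : 1 - μ1p j = μ1m j := by linarith [hμ1 j]
    have e2 : 1 - μ2p j = μ2m j := by linarith [hμ2 j]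
    rw [e1, e2] at hbp
    simp only [hδ]
    nlinarith [mul_nonneg (mul_nonneg hτ.le (hq j).le)
      (sub_nonneg.mpr hbp)]
  have h1 : ∀ j, |b j| ≤ ∑ i, |π1 i j - π2 i j| := by
    intro j
    simp only [hb]
    rw [← Finset.sum_sub_distrib]
    exact Finset.abs_sum_le_sum_abs _ _
  have h2 : ∑ j, |b j| ≤ ∑ x : Fin n × Fin n, |π1 x.1 x.2 - π2 x.1 x.2| := by
    rw [Fintype.sum_prod_type]
    calc ∑ j, |b j| ≤ ∑ j, ∑ i, |π1 i j - π2 i j| := Finset.sum_le_sum fun j _ => h1 j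
      _ = ∑ i, ∑ j, |π1 i j - π2 i j| := Finset.sum_comm
  have h3 : ∑ j, (b j)^2 ≤ (∑ j, |b j|)^2 := by
    have := Finset.sum_sq_le_sq_sum_of_nonneg
      (f := fun j => |b j|) (s := Finset.univ) (fun j _ => abs_nonneg _)
    simpa [sq_abs] using this
  have h4 : (∑ j, |b j|)^2 ≤ (∑ x : Fin n × Fin n, |π1 x.1 x.2 - π2 x.1 x.2|)^2 :=
    pow_le_pow_left₀ (Finset.sum_nonneg fun j _ => abs_nonneg _) h2 2
  have hsq : ∑ j, (b j)^2 ≤ 2 * KLπ := le_trans h3 (le_trans h4 hπpin)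
  have hB : (∑ j, (b j)^2) / (τ * qmin) ≤ 2 / (τ * qmin) * KLπ := by
    have := (div_le_div_iff_of_pos_right hc).mpr hsq
    calc (∑ j, (b j)^2) / (τ * qmin) ≤ (2 * KLπ) / (τ * qmin) := this
      _ = 2 / (τ * qmin) * KLπ := by ring
  calc ∑ j, (μ1p j - μ2p j - μ1m j + μ2m j) * ((∑ i, π1 i j) - (∑ i, π2 i j))
      = ∑ j, (μ1p j - μ2p j - μ1m j + μ2m j) * b j :=
        Finset.sum_congr rfl fun j _ => by rw [hb]
    _ ≤ ∑ j, (τ * q j * (δ j)^2 + (b j)^2 / (τ * qmin)) :=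
        Finset.sum_le_sum fun j _ => hstep j
    _ = (∑ j, τ * q j * (δ j)^2) + (∑ j, (b j)^2) / (τ * qmin) := by
        rw [Finset.sum_add_distrib, Finset.sum_div]
    _ ≤ τ/2 * (∑ j, q j * (μ1p j * Real.log (μ1p j / μ2p j) +
          μ1m j * Real.log (μ1m j / μ2m j))) + 2 / (τ * qmin) * KLπ :=
        add_le_add hA hB
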